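/- Let χ = (χ_n)_{n=0}^{p+1} be the solution of the Jacobi recursion with χ_{p+1} = 0, χ_p = I, and φ the fundamental solution with φ₀ = 0, φ₁ = I. Then χ₀(z̄)ᴴ = φ_{p+1}(z) for all z ∈ ℂ. -/
import Mathlib


open Matrix

/-- For the solution `χ` of the Jacobi recursion with `χ_{p+1} = 0`, `χ_p = I`, and
the fundamental solution `φ` (with `φ₀ = 0`, `φ₁ = I`), one has
`χ₀(z̄)ᴴ = φ_{p+1}(z)` for all `z ∈ ℂ`. -/
theorem chi_zero_eq_phi (m p : ℕ) (hp : 1 ≤ p)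
    (a b : ℕ → Matrix (Fin m) (Fin m) ℂ)
    (ha0 : a 0 = 1) (hap : a p = 1)
    (hb : ∀ n, 1 ≤ n → n ≤ p → (b n).IsHermitian)
    (haInv : ∀ n, 1 ≤ n → n ≤ p - 1 → IsUnit (a n))
    (φ χ : ℕ → ℂ → Matrix (Fin m) (Fin m) ℂ)
    (hφ0 : ∀ z, φ 0 z = 0) (hφ1 : ∀ z, φ 1 z = 1)
    (hφ : ∀ (z : ℂ) (n : ℕ), 1 ≤ n → n ≤ p →
      a n * φ (n + 1) z + b n * φ n z + (a (n - 1))ᴴ * φ (n - 1) z = z • φ n z)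
    (hχp1 : ∀ z, χ (p + 1) z = 0) (hχp : ∀ z, χ p z = 1)
    (hχ : ∀ (z : ℂ) (n : ℕ), 1 ≤ n → n ≤ p →
      a n * χ (n + 1) z + b n * χ n z + (a (n - 1))ᴴ * χ (n - 1) z = z • χ n z) :
    ∀ z : ℂ, (χ 0 ((starRingEnd ℂ) z))ᴴ = φ (p + 1) z := by
  intro z
  set z' : ℂ := (starRingEnd ℂ) z with hz'
  -- the Wronskian
  set W : ℕ → Matrix (Fin m) (Fin m) ℂ := fun n =>
    (χ n z')ᴴ * (a n) * φ (n + 1) z - (χ (n + 1) z')ᴴ * (a n)ᴴ * φ n z with hW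
  have key : ∀ n, 1 ≤ n → n ≤ p → W n = W (n - 1) := by
    intro n hn1 hn2
    obtain ⟨k, rfl⟩ := Nat.exists_eq_add_of_le hn1
    have hk : 1 + k - 1 = k := by omega
    have h1 := hφ z (1 + k) hn1 hn2
    have h2 := hχ z' (1 + k) hn1 hn2
    rw [hk] at h1 h2 ⊢
    -- rewrite h1 : a(1+k) * φ(1+k+1) = z • φ(1+k) - b(1+k)*φ(1+k) - a(k)ᴴ*φ(k)
    have e1 : a (1 + k) * φ (1 + k + 1) z
        = z • φ (1 + k) z - b (1 + k) * φ (1 + k) z - (a k)ᴴ * φ k z := by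
      linear_combination (norm := module) h1
    -- conjugate-transpose of h2
    have e2 : (χ (1 + k + 1) z')ᴴ * (a (1 + k))ᴴ
        = z • (χ (1 + k) z')ᴴ - (χ (1 + k) z')ᴴ * b (1 + k) - (χ k z')ᴴ * a k := by
      have := congrArg conjTranspose h2
      simp only [conjTranspose_add, conjTranspose_mul, conjTranspose_conjTranspose,
        conjTranspose_smul] at this
      have hbH : (b (1 + k))ᴴ = b (1 + k) := (hb (1 + k) hn1 hn2)
      rw [hbH] at this
      have hz'' : (star z' : ℂ) = z := by
        simp [hz', RCLike.star_def]
      rw [hz''] at this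
      linear_combination (norm := module) this
    simp only [hW]
    rw [mul_assoc, e1, e2]
    simp only [mul_sub, sub_mul, mul_smul_comm, smul_mul_assoc, mul_assoc]
    abel
  have const : ∀ n, n ≤ p → W n = W 0 := by
    intro n hn
    induction n with
    | zero => rfl
    | succ k ih =>
      have h := key (k + 1) (by omega) hn
      simp only [Nat.add_sub_cancel] at h
      rw [h, ih (by omega)]
  have hWp := const p le_rfl
  have hW0 : W 0 = (χ 0 z')ᴴ := by
    simp [hW, ha0, hφ0, hφ1]
  have hWpval : W p = φ (p + 1) z := by
    simp [hW, hap, hχp1, hχp]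
  rw [← hW0, ← hWp, hWpval]
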